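/- Fix a permutation π of V, J ∈ V, and an integer m ≥ 1. Suppose a^J_I = 0 for every I ∈ V with Hamming weight |I| > m. Then every coefficient a^J_g is a dyadic rational with denominator 2^{m−1}: for every g ∈ V there exists an integer z with a^J_g = z / 2^{m−1}. -/

import Mathlib

open Finset

/-- Hamming weight of an n-bit vector. -/
def wt {n : ℕ} (v : Fin n → ZMod 2) : ℕ :=
  (Finset.univ.filter (fun i => v i = 1)).card

/-- The sign (-1)^{u·v} ∈ ℝ. -/
noncomputable def sgn {n : ℕ} (u v : Fin n → ZMod 2) : ℝ :=
  if (∑ i, u i * v i) = (1 : ZMod 2) then -1 else 1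

lemma zmod2_cases (a : ZMod 2) : a = 0 ∨ a = 1 := by
  have h : ∀ b : ZMod 2, b = 0 ∨ b = 1 := by decide
  exact h a

lemma sgn_mul_right {n : ℕ} (u x y : Fin n → ZMod 2) :
    sgn u (x + y) = sgn u x * sgn u y := by
  unfold sgn
  have h : (∑ i, u i * (x + y) i) = (∑ i, u i * x i) + (∑ i, u i * y i) := by
    rw [← Finset.sum_add_distrib]
    exact Finset.sum_congr rfl fun i _ => by simp [Pi.add_apply]; ring
  rw [h]
  rcases zmod2_cases (∑ i, u i * x i) with h1 | h1 <;>
    rcases zmod2_cases (∑ i, u i * y i) with h2 | h2 <;>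
      rw [h1, h2] <;> norm_num <;> decide

lemma sgn_comm {n : ℕ} (u v : Fin n → ZMod 2) : sgn u v = sgn v u := by
  have h : (∑ i, u i * v i) = ∑ i, v i * u i :=
    Finset.sum_congr rfl fun i _ => mul_comm _ _
  unfold sgn
  rw [h]

lemma sgn_add_left {n : ℕ} (u v x : Fin n → ZMod 2) :
    sgn (u + v) x = sgn u x * sgn v x := by
  rw [sgn_comm, sgn_mul_right, sgn_comm x u, sgn_comm x v]

lemma sgn_zero_left {n : ℕ} (x : Fin n → ZMod 2) : sgn 0 x = 1 := by
  unfold sgn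
  simp

lemma sgn_sq {n : ℕ} (u x : Fin n → ZMod 2) : sgn u x * sgn u x = 1 := by
  unfold sgn; split <;> norm_num

def ei {n : ℕ} (i : Fin n) : Fin n → ZMod 2 := fun j => if j = i then 1 else 0

lemma sgn_ei_right {n : ℕ} (I : Fin n → ZMod 2) (i : Fin n) :
    sgn I (ei i) = if I i = 1 then (-1 : ℝ) else 1 := by
  unfold sgn ei
  congr 1
  rw [Finset.sum_eq_single i (fun j _ hj => by simp [hj]) (by simp)]
  simp

lemma sgn_ei_left {n : ℕ} (i : Fin n) (x : Fin n → ZMod 2) :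
    sgn (ei i) x = if x i = 1 then (-1 : ℝ) else 1 := by
  rw [sgn_comm, sgn_ei_right]

lemma self_add_self {n : ℕ} (v : Fin n → ZMod 2) : v + v = 0 := by
  funext j
  have : ∀ a : ZMod 2, a + a = 0 := by decide
  exact this (v j)

lemma sumTranslate {n : ℕ} (F : (Fin n → ZMod 2) → ℝ) (v : Fin n → ZMod 2) :
    ∑ x : Fin n → ZMod 2, F (x + v) = ∑ x : Fin n → ZMod 2, F x :=
  Fintype.sum_equiv (Equiv.addRight v) _ _ (fun x => rfl)

lemma sum_sgn_zero {n : ℕ} {S : Fin n → ZMod 2} (hS : S ≠ 0) :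
    ∑ x : Fin n → ZMod 2, sgn S x = 0 := by
  obtain ⟨j, hj⟩ : ∃ j, S j ≠ 0 := by
    by_contra h
    push_neg at h
    exact hS (funext h)
  have hj1 : S j = 1 := (zmod2_cases (S j)).resolve_left hj
  have h := sumTranslate (fun x => sgn S x) (ei j)
  simp only [sgn_mul_right, sgn_ei_right, hj1, if_true] at h
  simp only [mul_neg, mul_one, Finset.sum_neg_distrib] at h
  linarith [h]

lemma pairing {n : ℕ} (F : (Fin n → ZMod 2) → ℝ) {S : Fin n → ZMod 2} {j : Fin n}
    (hj : S j = 1) (hF : ∀ x, F (x + ei j) = F x) :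
    ∑ x : Fin n → ZMod 2, F x * sgn S x = 0 := by
  have h := sumTranslate (fun x => F x * sgn S x) (ei j)
  simp only [hF, sgn_mul_right, sgn_ei_right, hj, if_true] at h
  simp only [mul_neg, mul_one, Finset.sum_neg_distrib] at h
  linarith [h]

lemma shift_sum {n : ℕ} (g : (Fin n → ZMod 2) → ℝ) (I v : Fin n → ZMod 2) :
    ∑ x : Fin n → ZMod 2, g (x + v) * sgn I x
      = sgn I v * ∑ x : Fin n → ZMod 2, g x * sgn I x := by
  have h := sumTranslate (fun x => g (x + v) * sgn I x) v
  rw [← h]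
  rw [Finset.mul_sum]
  refine Finset.sum_congr rfl fun x _ => ?_
  rw [add_assoc, self_add_self, add_zero, sgn_mul_right]
  ring

lemma wt_pos {n : ℕ} {I : Fin n → ZMod 2} (hI : I ≠ 0) : 0 < wt I := by
  obtain ⟨j, hj⟩ : ∃ j, I j ≠ 0 := by
    by_contra h; push_neg at h; exact hI (funext h)
  have hj1 : I j = 1 := (zmod2_cases (I j)).resolve_left hj
  exact Finset.card_pos.2 ⟨j, by simp [wt, hj1]⟩

lemma wt_add_ei {n : ℕ} {I : Fin n → ZMod 2} {i : Fin n} (hIi : I i = 0) :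
    wt (I + ei i) = wt I + 1 := by
  unfold wt
  have h : (Finset.univ.filter (fun j => (I + ei i) j = 1))
      = insert i (Finset.univ.filter (fun j => I j = 1)) := by
    ext j
    rw [Finset.mem_filter, Finset.mem_insert, Finset.mem_filter]
    by_cases hji : j = i
    · subst hji
      simp [ei, hIi]
    · simp only [Finset.mem_filter, Finset.mem_univ, true_and, Finset.mem_insert, hji,
        false_or, Pi.add_apply, ei, if_neg hji, add_zero]
      simp
  rw [h, Finset.card_insert_of_notMem (by simp [hIi])]

lemma exists_int_sum {α : Type*} (s : Finset α) (f : α → ℝ)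
    (h : ∀ x ∈ s, ∃ k : ℤ, f x = k) : ∃ k : ℤ, ∑ x ∈ s, f x = k := by
  classical
  induction s using Finset.induction with
  | empty => exact ⟨0, by simp⟩
  | insert _ _ hx ih =>
    obtain ⟨k1, hk1⟩ := h _ (Finset.mem_insert_self _ _)
    obtain ⟨k2, hk2⟩ := ih (fun x hxs => h x (Finset.mem_insert_of_mem hxs))
    exact ⟨k1 + k2, by rw [Finset.sum_insert hx, hk1, hk2]; push_cast; ring⟩

lemma sgn_congr {n : ℕ} {S x y : Fin n → ZMod 2}
    (h : ∀ i, S i = 1 → x i = y i) : sgn S x = sgn S y := by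
  unfold sgn
  have hs : (∑ i, S i * x i) = ∑ i, S i * y i := by
    refine Finset.sum_congr rfl fun i _ => ?_
    rcases zmod2_cases (S i) with h0 | h1
    · rw [h0]; ring
    · rw [h i h1]
  rw [hs]

lemma card_V (n : ℕ) : Fintype.card (Fin n → ZMod 2) = 2 ^ n := by
  simp

lemma sum_sgn_right {n : ℕ} (y : Fin n → ZMod 2) :
    ∑ I : Fin n → ZMod 2, sgn I y = if y = 0 then (2 : ℝ) ^ n else 0 := by
  by_cases hy : y = 0
  · subst hy
    rw [if_pos rfl]
    have h : ∀ I : Fin n → ZMod 2, sgn I 0 = 1 := fun I => by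
      rw [sgn_comm]; exact sgn_zero_left I
    simp only [h, Finset.sum_const, Finset.card_univ, card_V, nsmul_eq_mul, mul_one]
    push_cast; ring
  · rw [if_neg hy, ← sum_sgn_zero hy]
    exact Finset.sum_congr rfl fun I _ => sgn_comm I y

lemma inversion_zero {n : ℕ} (g : (Fin n → ZMod 2) → ℝ) :
    ∑ I : Fin n → ZMod 2, ∑ y : Fin n → ZMod 2, g y * sgn I y = 2 ^ n * g 0 := by
  rw [Finset.sum_comm]
  have h : ∀ y : Fin n → ZMod 2, ∑ I : Fin n → ZMod 2, g y * sgn I y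
      = g y * (if y = 0 then (2:ℝ)^n else 0) := by
    intro y
    rw [← Finset.mul_sum, sum_sgn_right]
  simp only [h]
  rw [Finset.sum_eq_single (0 : Fin n → ZMod 2) (fun b _ hb => by simp [hb]) (by simp)]
  simp [mul_comm]

lemma cylinder_sum {n : ℕ} (T : Finset (Fin n)) (F : (Fin n → ZMod 2) → ℝ)
    (hint : ∀ x, ∃ k : ℤ, F x = k)
    (hdep : ∀ x y, (∀ i ∈ T, x i = y i) → F x = F y) :
    ∃ k : ℤ, ∑ x : Fin n → ZMod 2, F x = (k : ℝ) * 2 ^ (n - T.card) := by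
  classical
  set p : Fin n → Prop := fun i => i ∈ T with hp
  let e := Equiv.piEquivPiSubtypeProd p (fun _ => ZMod 2)
  have h1 : ∑ x : Fin n → ZMod 2, F x
      = ∑ y : (∀ i : {i // p i}, ZMod 2) × (∀ i : {i // ¬ p i}, ZMod 2), F (e.symm y) :=
    (Equiv.sum_comp e.symm F).symm
  have h2 : ∀ (a : ∀ i : {i // p i}, ZMod 2) (b : ∀ i : {i // ¬ p i}, ZMod 2),
      F (e.symm (a, b)) = F (e.symm (a, fun _ => 0)) := by
    intro a b
    apply hdep
    intro i hi
    simp [e, Equiv.piEquivPiSubtypeProd_symm_apply, hp, hi]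
  have hcard : Fintype.card (∀ i : {i // ¬ p i}, ZMod 2) = 2 ^ (n - T.card) := by
    rw [Fintype.card_pi]
    simp only [ZMod.card]
    rw [Finset.prod_const, Finset.card_univ, Fintype.card_subtype_compl]
    congr 1
    · simp [hp, Fintype.card_subtype]
  obtain ⟨k, hk⟩ := exists_int_sum Finset.univ
    (fun a : ∀ i : {i // p i}, ZMod 2 => F (e.symm (a, fun _ => 0)))
    (fun a _ => hint _)
  refine ⟨k, ?_⟩
  rw [h1, Fintype.sum_prod_type]
  simp only [h2]
  simp only [Finset.sum_const, Finset.card_univ, hcard, nsmul_eq_mul]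
  rw [← Finset.mul_sum, hk]
  push_cast
  ring

lemma upd_eval0 {n : ℕ} (g : (Fin n → ZMod 2) → ℝ) (i : Fin n) (x : Fin n → ZMod 2) :
    g (Function.update x i 0)
      = ((1 + sgn (ei i) x) * g x + (1 - sgn (ei i) x) * g (x + ei i)) / 2 := by
  rcases zmod2_cases (x i) with h | h
  · rw [sgn_ei_left, if_neg (by rw [h]; decide)]
    have hx : Function.update x i 0 = x := by rw [← h]; exact Function.update_eq_self i x
    rw [hx]; ring
  · rw [sgn_ei_left, if_pos h]
    have hx : Function.update x i 0 = x + ei i := by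
      funext j
      by_cases hji : j = i
      · subst hji; simp [ei, h] <;> decide
      · simp [Function.update_of_ne hji, ei, hji]
    rw [hx]; ring

lemma upd_eval1 {n : ℕ} (g : (Fin n → ZMod 2) → ℝ) (i : Fin n) (x : Fin n → ZMod 2) :
    g (Function.update x i 1)
      = ((1 - sgn (ei i) x) * g x + (1 + sgn (ei i) x) * g (x + ei i)) / 2 := by
  rcases zmod2_cases (x i) with h | h
  · rw [sgn_ei_left, if_neg (by rw [h]; decide)]
    have hx : Function.update x i 1 = x + ei i := by
      funext j
      by_cases hji : j = i
      · subst hji; simp [ei, h] <;> decide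
      · simp [Function.update_of_ne hji, ei, hji]
    rw [hx]; ring
  · rw [sgn_ei_left, if_pos h]
    have hx : Function.update x i 1 = x := by rw [← h]; exact Function.update_eq_self i x
    rw [hx]; ring

lemma sum_upd0 {n : ℕ} (g : (Fin n → ZMod 2) → ℝ) (i : Fin n) (I : Fin n → ZMod 2)
    (hIi : I i = 0) :
    ∑ x : Fin n → ZMod 2, g (Function.update x i 0) * sgn I x
      = (∑ x : Fin n → ZMod 2, g x * sgn I x)
        + ∑ x : Fin n → ZMod 2, g x * sgn (I + ei i) x := by
  have e1 : ∑ x : Fin n → ZMod 2, g (x + ei i) * sgn I x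
      = ∑ x : Fin n → ZMod 2, g x * sgn I x := by
    rw [shift_sum, sgn_ei_right, if_neg (by rw [hIi]; decide), one_mul]
  have e2 : ∑ x : Fin n → ZMod 2, g (x + ei i) * sgn (I + ei i) x
      = -∑ x : Fin n → ZMod 2, g x * sgn (I + ei i) x := by
    rw [shift_sum, sgn_ei_right, if_pos (by simp [ei, hIi])]
    ring
  have key : ∀ x, g (Function.update x i 0) * sgn I x
      = (g x * sgn I x + g x * sgn (I + ei i) x
         + g (x + ei i) * sgn I x - g (x + ei i) * sgn (I + ei i) x) / 2 := by
    intro x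
    rw [upd_eval0 g i x,
      show sgn (I + ei i) x = sgn (ei i) x * sgn I x from by rw [add_comm I, sgn_add_left]]
    ring
  rw [Finset.sum_congr rfl (fun x _ => key x), ← Finset.sum_div,
    Finset.sum_sub_distrib, Finset.sum_add_distrib, Finset.sum_add_distrib, e1, e2]
  ring

lemma sum_upd1 {n : ℕ} (g : (Fin n → ZMod 2) → ℝ) (i : Fin n) (I : Fin n → ZMod 2)
    (hIi : I i = 0) :
    ∑ x : Fin n → ZMod 2, g (Function.update x i 1) * sgn I x
      = (∑ x : Fin n → ZMod 2, g x * sgn I x)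
        - ∑ x : Fin n → ZMod 2, g x * sgn (I + ei i) x := by
  have e1 : ∑ x : Fin n → ZMod 2, g (x + ei i) * sgn I x
      = ∑ x : Fin n → ZMod 2, g x * sgn I x := by
    rw [shift_sum, sgn_ei_right, if_neg (by rw [hIi]; decide), one_mul]
  have e2 : ∑ x : Fin n → ZMod 2, g (x + ei i) * sgn (I + ei i) x
      = -∑ x : Fin n → ZMod 2, g x * sgn (I + ei i) x := by
    rw [shift_sum, sgn_ei_right, if_pos (by simp [ei, hIi])]
    ring
  have key : ∀ x, g (Function.update x i 1) * sgn I x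
      = (g x * sgn I x - g x * sgn (I + ei i) x
         + g (x + ei i) * sgn I x + g (x + ei i) * sgn (I + ei i) x) / 2 := by
    intro x
    rw [upd_eval1 g i x,
      show sgn (I + ei i) x = sgn (ei i) x * sgn I x from by rw [add_comm I, sgn_add_left]]
    ring
  rw [Finset.sum_congr rfl (fun x _ => key x), ← Finset.sum_div,
    Finset.sum_add_distrib, Finset.sum_add_distrib, Finset.sum_sub_distrib, e1, e2]
  ring

lemma gran {n : ℕ} (T : Finset (Fin n)) : ∀ (m : ℕ) (g : (Fin n → ZMod 2) → ℝ),
    (∀ x, ∃ k : ℤ, g x = k) →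
    (∀ x y, (∀ i ∈ T, x i = y i) → g x = g y) →
    (∀ I, m < wt I → ∑ x : Fin n → ZMod 2, g x * sgn I x = 0) →
    ∀ S : Fin n → ZMod 2,
      ∃ z : ℤ, (2:ℝ)^m * ∑ x : Fin n → ZMod 2, g x * sgn S x = (z : ℝ) * 2^n := by
  classical
  induction T using Finset.strongInduction with
  | _ T IH =>
  intro m g hint hdep hcoef S
  by_cases hbm : T.card ≤ m
  · -- base case: few active coordinates
    by_cases hST : ∀ j, S j = 1 → j ∈ T
    · obtain ⟨k, hk⟩ := cylinder_sum T (fun x => g x * sgn S x)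
        (fun x => by
          obtain ⟨k, hk⟩ := hint x
          show ∃ k' : ℤ, g x * sgn S x = (k' : ℝ)
          unfold sgn
          split
          · exact ⟨-k, by rw [hk]; push_cast; ring⟩
          · exact ⟨k, by rw [hk]; ring⟩)
        (fun x y h => by
          show g x * sgn S x = g y * sgn S y
          rw [hdep x y h, sgn_congr (fun i hi => h i (hST i hi))])
      refine ⟨k * 2 ^ (m - T.card), ?_⟩
      have htn : T.card ≤ n := by
        simpa using Finset.card_le_univ T
      have h1 : (2:ℝ)^m = 2^(m - T.card) * 2^T.card := by
        rw [← pow_add, Nat.sub_add_cancel hbm]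
      have h2 : (2:ℝ)^T.card * 2^(n - T.card) = 2^n := by
        rw [← pow_add, Nat.add_sub_cancel' htn]
      rw [hk, h1]
      push_cast
      linear_combination ((k : ℝ) * 2^(m - T.card)) * h2
    · push_neg at hST
      obtain ⟨j, hj1, hjT⟩ := hST
      refine ⟨0, ?_⟩
      rw [pairing g hj1 (fun x => hdep _ _ (fun i hi => by
        have hij : i ≠ j := fun h => hjT (h ▸ hi)
        simp [ei, hij]))]
      simp
  · push_neg at hbm
    by_cases hm0 : m = 0
    · -- m = 0 : g is constant
      subst hm0
      by_cases hS0 : S = 0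
      · subst hS0
        obtain ⟨k, hk⟩ := hint 0
        refine ⟨k, ?_⟩
        have h1 : ∑ I : Fin n → ZMod 2, ∑ y : Fin n → ZMod 2, g y * sgn I y
            = ∑ y : Fin n → ZMod 2, g y * sgn (0 : Fin n → ZMod 2) y := by
          rw [Finset.sum_eq_single (0 : Fin n → ZMod 2)
            (fun b _ hb => hcoef b (wt_pos hb)) (by simp)]
        rw [inversion_zero] at h1
        rw [← h1, hk, pow_zero, one_mul]
        ring
      · exact ⟨0, by rw [hcoef S (wt_pos hS0)]; simp⟩
    · -- inductive step
      obtain ⟨i, hiT⟩ := Finset.card_pos.1 (lt_of_le_of_lt (Nat.zero_le m) hbm)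
      have hss : T.erase i ⊂ T := Finset.erase_ssubset hiT
      set g0 : (Fin n → ZMod 2) → ℝ := fun x => g (Function.update x i 0) with hg0
      set g1 : (Fin n → ZMod 2) → ℝ := fun x => g (Function.update x i 1) with hg1
      set d : (Fin n → ZMod 2) → ℝ := fun x => g0 x - g1 x with hd
      have hupd : ∀ (c : ZMod 2) (x y : Fin n → ZMod 2), (∀ j ∈ T.erase i, x j = y j) →
          ∀ j ∈ T, Function.update x i c j = Function.update y i c j := by
        intro c x y h j hj
        by_cases hji : j = i
        · subst hji; simp
        · rw [Function.update_of_ne hji, Function.update_of_ne hji]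
          exact h j (Finset.mem_erase.2 ⟨hji, hj⟩)
      have hdep0 : ∀ x y, (∀ j ∈ T.erase i, x j = y j) → g0 x = g0 y :=
        fun x y h => hdep _ _ (hupd 0 x y h)
      have hdep1 : ∀ x y, (∀ j ∈ T.erase i, x j = y j) → g1 x = g1 y :=
        fun x y h => hdep _ _ (hupd 1 x y h)
      have hdepd : ∀ x y, (∀ j ∈ T.erase i, x j = y j) → d x = d y :=
        fun x y h => by rw [hd]; simp only; rw [hdep0 x y h, hdep1 x y h]
      have hupd2 : ∀ (c : ZMod 2) (x : Fin n → ZMod 2),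
          Function.update (x + ei i) i c = Function.update x i c := by
        intro c x
        funext j
        by_cases hji : j = i
        · subst hji; simp
        · simp [Function.update_of_ne hji, ei, hji]
      have hinv0 : ∀ x, g0 (x + ei i) = g0 x := fun x => by
        rw [hg0]; simp only; rw [hupd2]
      have hinv1 : ∀ x, g1 (x + ei i) = g1 x := fun x => by
        rw [hg1]; simp only; rw [hupd2]
      have hinvd : ∀ x, d (x + ei i) = d x := fun x => by
        rw [hd]; simp only; rw [hinv0, hinv1]
      have hint0 : ∀ x, ∃ k : ℤ, g0 x = k := fun x => hint _
      have hintd : ∀ x, ∃ k : ℤ, d x = k := fun x => by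
        obtain ⟨k1, hk1⟩ := hint (Function.update x i 0)
        obtain ⟨k2, hk2⟩ := hint (Function.update x i 1)
        exact ⟨k1 - k2, by rw [hd]; simp only [hg0, hg1]; rw [hk1, hk2]; push_cast; ring⟩
      have hcoef0 : ∀ I, m < wt I → ∑ x : Fin n → ZMod 2, g0 x * sgn I x = 0 := by
        intro I hI
        rcases zmod2_cases (I i) with hIi | hIi
        · rw [hg0]; simp only
          rw [sum_upd0 g i I hIi, hcoef I hI,
            hcoef (I + ei i) (by rw [wt_add_ei hIi]; omega), add_zero]
        · exact pairing g0 hIi hinv0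
      have hcoefd : ∀ I, m - 1 < wt I → ∑ x : Fin n → ZMod 2, d x * sgn I x = 0 := by
        intro I hI
        rcases zmod2_cases (I i) with hIi | hIi
        · have hwI : m ≤ wt I := by omega
          have hb : ∑ x : Fin n → ZMod 2, g x * sgn (I + ei i) x = 0 :=
            hcoef _ (by rw [wt_add_ei hIi]; omega)
          have hsplit : ∑ x : Fin n → ZMod 2, d x * sgn I x
              = (∑ x : Fin n → ZMod 2, g0 x * sgn I x)
                - ∑ x : Fin n → ZMod 2, g1 x * sgn I x := by
            rw [← Finset.sum_sub_distrib]
            exact Finset.sum_congr rfl fun x _ => by rw [hd]; ring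
          rw [hsplit, hg0, hg1]; simp only
          rw [sum_upd0 g i I hIi, sum_upd1 g i I hIi, hb]
          ring
        · exact pairing d hIi hinvd
      obtain ⟨za, hza⟩ := IH _ hss m g0 hint0 hdep0 hcoef0 S
      obtain ⟨zb, hzb⟩ := IH _ hss (m-1) d hintd hdepd hcoefd (S + ei i)
      obtain ⟨zc, hzc⟩ := IH _ hss (m-1) d hintd hdepd hcoefd S
      have hm2 : (2:ℝ)^m = 2 * 2^(m-1) := by
        conv_lhs => rw [show m = (m-1)+1 from (Nat.succ_pred_eq_of_ne_zero hm0).symm]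
        rw [pow_succ]
        ring
      have hpt : ∀ x, g x = g0 x + (sgn (ei i) x - 1)/2 * d x := by
        intro x
        rcases zmod2_cases (x i) with h | h
        · rw [sgn_ei_left, if_neg (by rw [h]; decide)]
          have hx : Function.update x i 0 = x := by rw [← h]; exact Function.update_eq_self i x
          rw [hg0]; simp only
          rw [hx]; ring
        · rw [sgn_ei_left, if_pos h]
          have hx : Function.update x i 1 = x := by rw [← h]; exact Function.update_eq_self i x
          rw [hd, hg0, hg1]; simp only
          rw [hx]; ring
      have hsplit : ∑ x : Fin n → ZMod 2, g x * sgn S x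
          = (∑ x : Fin n → ZMod 2, g0 x * sgn S x)
            + (∑ x : Fin n → ZMod 2, d x * sgn (S + ei i) x)/2
            - (∑ x : Fin n → ZMod 2, d x * sgn S x)/2 := by
        have hterm : ∀ x, g x * sgn S x
            = g0 x * sgn S x + (d x * sgn (S + ei i) x)/2 - (d x * sgn S x)/2 := by
          intro x
          rw [show sgn (S + ei i) x = sgn (ei i) x * sgn S x from by
            rw [add_comm S, sgn_add_left], hpt x]
          ring
        rw [Finset.sum_congr rfl (fun x _ => hterm x), Finset.sum_sub_distrib,
          Finset.sum_add_distrib, ← Finset.sum_div, ← Finset.sum_div]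
      refine ⟨za + zb - zc, ?_⟩
      rw [hsplit]
      push_cast
      linear_combination hza + hzb - hzc
        + ((∑ x : Fin n → ZMod 2, d x * sgn (S + ei i) x)/2
           - (∑ x : Fin n → ZMod 2, d x * sgn S x)/2) * hm2

/-- Fourier coefficient a^J_I, for a permutation π of V = Fin n → ZMod 2. -/
noncomputable def fc {n : ℕ} (π : Equiv.Perm (Fin n → ZMod 2))
    (J I : Fin n → ZMod 2) : ℝ :=
  (1 / 2 ^ n) * ∑ x : Fin n → ZMod 2, sgn I x * sgn (π x) J

/-- If all Fourier coefficients of J vanish above locality m, then every coefficient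
a^J_g is a dyadic rational with denominator 2^(m-1). -/
theorem fc_dyadic {n : ℕ} (hn : 1 ≤ n) (π : Equiv.Perm (Fin n → ZMod 2))
    (J : Fin n → ZMod 2) (m : ℕ) (hm : 1 ≤ m)
    (hloc : ∀ I : Fin n → ZMod 2, m < wt I → fc π J I = 0) :
    ∀ g : Fin n → ZMod 2, ∃ z : ℤ, fc π J g = (z : ℝ) / 2 ^ (m - 1) := by
  classical
  intro g
  set A : (Fin n → ZMod 2) → ℝ := fun x => (1 - sgn (π x) J) / 2 with hA
  have h2n : (2:ℝ)^n ≠ 0 := by positivity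
  have h2m : (2:ℝ)^m ≠ 0 := by positivity
  have h2m1 : (2:ℝ)^(m-1) ≠ 0 := by positivity
  have hintA : ∀ x, ∃ k : ℤ, A x = k := by
    intro x
    rw [hA]; simp only
    unfold sgn
    split
    · exact ⟨1, by norm_num⟩
    · exact ⟨0, by norm_num⟩
  have hdepA : ∀ x y, (∀ i ∈ (Finset.univ : Finset (Fin n)), x i = y i) → A x = A y := by
    intro x y h
    have hxy : x = y := funext fun i => h i (Finset.mem_univ i)
    rw [hxy]
  have hcoefA : ∀ I, m < wt I → ∑ x : Fin n → ZMod 2, A x * sgn I x = 0 := by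
    intro I hI
    have hI0 : I ≠ 0 := by
      intro h
      subst h
      have : wt (0 : Fin n → ZMod 2) = 0 := by
        unfold wt
        simp
      omega
    have hsgnI : ∑ x : Fin n → ZMod 2, sgn I x = 0 := by
      rw [Finset.sum_congr rfl (fun x _ => sgn_comm I x)]
      rw [show (∑ x : Fin n → ZMod 2, sgn x I) = ∑ x : Fin n → ZMod 2, sgn x I from rfl]
      have := sum_sgn_right I
      rw [this, if_neg hI0]
    have hf : ∑ x : Fin n → ZMod 2, sgn I x * sgn (π x) J = 0 := by
      have h := hloc I hI
      unfold fc at h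
      rcases mul_eq_zero.mp h with h' | h'
      · exact absurd h' (by positivity)
      · exact h'
    have hterm : ∀ x, A x * sgn I x = (sgn I x - sgn I x * sgn (π x) J) / 2 := by
      intro x
      rw [hA]; simp only
      ring
    rw [Finset.sum_congr rfl (fun x _ => hterm x), ← Finset.sum_div,
      Finset.sum_sub_distrib, hsgnI, hf]
    norm_num
  obtain ⟨z, hz⟩ := gran (Finset.univ : Finset (Fin n)) m A hintA hdepA hcoefA g
  have hE : ∑ x : Fin n → ZMod 2, sgn g x * sgn (π x) J
      = (if g = 0 then (2:ℝ)^n else 0) - 2 * ∑ x : Fin n → ZMod 2, A x * sgn g x := by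
    have hterm : ∀ x, sgn g x * sgn (π x) J = sgn g x - 2 * (A x * sgn g x) := by
      intro x
      rw [hA]; simp only
      ring
    rw [Finset.sum_congr rfl (fun x _ => hterm x), Finset.sum_sub_distrib]
    congr 1
    · rw [Finset.sum_congr rfl (fun x _ => sgn_comm g x), sum_sgn_right]
    · rw [Finset.mul_sum]
  have hs : ∑ x : Fin n → ZMod 2, A x * sgn g x = z * 2^n / 2^m := by
    rw [eq_div_iff h2m]
    linarith [hz]
  have hm2 : (2:ℝ)^m = 2 * 2^(m-1) := by
    conv_lhs => rw [show m = (m-1)+1 from by omega]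
    rw [pow_succ]
    ring
  by_cases hg : g = 0
  · refine ⟨2^(m-1) - z, ?_⟩
    unfold fc
    rw [hE, if_pos hg, hs, hm2]
    push_cast
    field_simp
  · refine ⟨-z, ?_⟩
    unfold fc
    rw [hE, if_neg hg, hs, hm2]
    push_cast
    field_simp
    ring
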